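/- arXiv:0812.2659 — 4 statements merged into one kernel-verified Lean document; each statement's English description precedes it below -/
import Mathlib

section
/- Let E be a finite-dimensional real inner product space and let V, W be subspaces of E with orthogonal projections pr_V, pr_W. Then 0 ≤ tr(pr_V ∘ pr_W) ≤ min(dim V, dim W). -/
open scoped RealInnerProductSpace

noncomputable def proj {E : Type*} [NormedAddCommGroup E] [InnerProductSpace ℝ E]
    (V : Submodule ℝ E) [V.HasOrthogonalProjection] : E →ₗ[ℝ] E :=
  V.subtype ∘ₗ V.orthogonalProjectionOnto.toLinearMap

section aux
variable {E : Type*} [NormedAddCommGroup E] [InnerProductSpace ℝ E]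
  [FiniteDimensional ℝ E]

lemma proj_apply (V : Submodule ℝ E) (x : E) : proj V x = (V.orthogonalProjectionOnto x : E) := rfl

lemma proj_idem (V : Submodule ℝ E) (x : E) : proj V (proj V x) = proj V x := by
  exact congrArg Subtype.val
    (Submodule.orthogonalProjectionOnto_mem_subspace_eq_self (V.orthogonalProjectionOnto x))

lemma proj_symm (V : Submodule ℝ E) (x y : E) : ⟪proj V x, y⟫ = ⟪x, proj V y⟫ :=
  Submodule.inner_starProjection_left_eq_right V x y

lemma inner_proj_self (V : Submodule ℝ E) (x : E) : ⟪x, proj V x⟫ = ‖proj V x‖ ^ 2 := by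
  rw [← real_inner_self_eq_norm_sq, proj_symm, proj_idem]

lemma trace_eq_sum_inner (f : E →ₗ[ℝ] E) (b : OrthonormalBasis (Fin (Module.finrank ℝ E)) ℝ E) :
    LinearMap.trace ℝ E f = ∑ i, ⟪b i, f (b i)⟫ := by
  classical
  rw [LinearMap.trace_eq_matrix_trace ℝ b.toBasis, Matrix.trace]
  congr 1
  ext i
  rw [Matrix.diag_apply, LinearMap.toMatrix_apply, OrthonormalBasis.coe_toBasis,
    OrthonormalBasis.coe_toBasis_repr_apply, OrthonormalBasis.repr_apply_apply]

lemma trace_proj (V : Submodule ℝ E) :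
    LinearMap.trace ℝ E (proj V) = Module.finrank ℝ V := by
  have : LinearMap.trace ℝ E (proj V) =
      LinearMap.trace ℝ V ((V.orthogonalProjectionOnto).toLinearMap ∘ₗ V.subtype) := by
    rw [proj, LinearMap.trace_comp_comm']
  rw [this]
  have h2 : (V.orthogonalProjectionOnto).toLinearMap ∘ₗ V.subtype = LinearMap.id := by
    ext v
    simp [Submodule.orthogonalProjectionOnto_mem_subspace_eq_self]
  rw [h2, LinearMap.trace_id]

lemma norm_proj_le (V : Submodule ℝ E) (x : E) : ‖proj V x‖ ≤ ‖x‖ := by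
  have h := inner_proj_self V x
  have h2 : ⟪x, proj V x⟫ ≤ ‖x‖ * ‖proj V x‖ := real_inner_le_norm _ _
  nlinarith [norm_nonneg (proj V x), norm_nonneg x]

lemma key (V W : Submodule ℝ E) :
    0 ≤ LinearMap.trace ℝ E (proj V ∘ₗ proj W) ∧
      LinearMap.trace ℝ E (proj V ∘ₗ proj W) ≤ (Module.finrank ℝ W : ℝ) := by
  classical
  set b := stdOrthonormalBasis ℝ E with hb
  have hQQ : proj W ∘ₗ proj W = proj W := by
    ext x; simp [LinearMap.comp_apply, proj_idem]
  have hc : LinearMap.trace ℝ E (proj V ∘ₗ proj W)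
      = LinearMap.trace ℝ E (proj W ∘ₗ (proj V ∘ₗ proj W)) := by
    conv_lhs => rw [← hQQ, ← LinearMap.comp_assoc]
    have := LinearMap.trace_mul_comm ℝ (proj V ∘ₗ proj W) (proj W)
    simpa only [Module.End.mul_eq_comp] using this
  have hterm : ∀ i, ⟪b i, (proj W ∘ₗ (proj V ∘ₗ proj W)) (b i)⟫
      = ‖proj V (proj W (b i))‖ ^ 2 := by
    intro i
    rw [LinearMap.comp_apply, LinearMap.comp_apply, ← proj_symm, inner_proj_self]
  have hsum : LinearMap.trace ℝ E (proj V ∘ₗ proj W)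
      = ∑ i, ‖proj V (proj W (b i))‖ ^ 2 := by
    rw [hc, trace_eq_sum_inner _ b]
    exact Finset.sum_congr rfl fun i _ => hterm i
  constructor
  · rw [hsum]
    exact Finset.sum_nonneg fun i _ => sq_nonneg _
  · have hW : (Module.finrank ℝ W : ℝ) = ∑ i, ‖proj W (b i)‖ ^ 2 := by
      rw [← trace_proj W, trace_eq_sum_inner _ b]
      exact Finset.sum_congr rfl fun i _ => inner_proj_self W (b i)
    rw [hsum, hW]
    refine Finset.sum_le_sum fun i _ => ?_
    have := norm_proj_le V (proj W (b i))
    nlinarith [norm_nonneg (proj V (proj W (b i))), norm_nonneg (proj W (b i))]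

end aux

theorem stmt_6 {E : Type*} [NormedAddCommGroup E] [InnerProductSpace ℝ E]
    [FiniteDimensional ℝ E] (V W : Submodule ℝ E) :
    0 ≤ LinearMap.trace ℝ E (proj V ∘ₗ proj W) ∧
      LinearMap.trace ℝ E (proj V ∘ₗ proj W)
        ≤ min (Module.finrank ℝ V : ℝ) (Module.finrank ℝ W : ℝ) := by
  obtain ⟨h1, h2⟩ := key V W
  have h3 : LinearMap.trace ℝ E (proj V ∘ₗ proj W)
      = LinearMap.trace ℝ E (proj W ∘ₗ proj V) := LinearMap.trace_mul_comm ℝ _ _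
  refine ⟨h1, le_min ?_ h2⟩
  rw [h3]
  exact (key W V).2
end

section
/- Let G be a finite subgroup of O(n) and t ≥ 1. Assume that every G-invariant polynomial function on ℝ^n of degree at most t which is homogeneous restricts to a constant function on the unit sphere S^{n−1}. Then for every point x₀ ∈ S^{n−1}, the orbit multiset {g·x₀ : g ∈ G} satisfies the quadrature formula (1/|G|)·Σ_{g∈G} f(g·x₀) = ∫_{S^{n−1}} f dσ for every polynomial f of degree at most t, where σ is the normalized rotation-invariant measure on S^{n−1}. -/
open Matrix Finset MeasureTheory

open MvPolynomial in
noncomputable def linComp {n : ℕ} (g : Matrix (Fin n) (Fin n) ℝ)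
    (p : MvPolynomial (Fin n) ℝ) : MvPolynomial (Fin n) ℝ :=
  MvPolynomial.bind₁ (fun i => ∑ j, MvPolynomial.C (g i j) * MvPolynomial.X j) p

open MvPolynomial in
lemma eval_linComp {n : ℕ} (g : Matrix (Fin n) (Fin n) ℝ) (p : MvPolynomial (Fin n) ℝ)
    (x : Fin n → ℝ) : eval x (linComp g p) = eval (g.mulVec x) p := by
  rw [linComp, MvPolynomial.hom_bind₁]
  have h1 : (MvPolynomial.eval x).comp (MvPolynomial.C (σ := Fin n) (R := ℝ)) = RingHom.id ℝ := by
    ext r; simp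
  have h2 : (fun i => eval x (∑ j, MvPolynomial.C (g i j) * MvPolynomial.X j)) = g.mulVec x := by
    funext i; simp [Matrix.mulVec, dotProduct]
  rw [h1, h2]
  rfl

open MvPolynomial in
lemma linComp_isHomogeneous {n k : ℕ} (g : Matrix (Fin n) (Fin n) ℝ)
    {p : MvPolynomial (Fin n) ℝ} (hp : p.IsHomogeneous k) :
    (linComp g p).IsHomogeneous k := by
  have := hp.aeval (fun i => ∑ j, MvPolynomial.C (g i j) * MvPolynomial.X j)
    (fun i => MvPolynomial.IsHomogeneous.sum _ _ _
      fun j _ => MvPolynomial.isHomogeneous_C_mul_X _ _)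
  rw [linComp, MvPolynomial.bind₁]
  simpa using this

set_option maxHeartbeats 1000000 in
theorem stmt_12 (n t : ℕ) (ht : 1 ≤ t)
    (G : Subgroup (Matrix.orthogonalGroup (Fin n) ℝ)) [Fintype G]
    (hinv : ∀ k : ℕ, k ≤ t → ∀ f : MvPolynomial (Fin n) ℝ, f.IsHomogeneous k →
      (∀ g : G, ∀ x : Fin n → ℝ,
        MvPolynomial.eval
          (((g : Matrix.orthogonalGroup (Fin n) ℝ) : Matrix (Fin n) (Fin n) ℝ).mulVec x) f
          = MvPolynomial.eval x f) →
      ∃ c : ℝ, ∀ x : EuclideanSpace ℝ (Fin n), ‖x‖ = 1 → MvPolynomial.eval (x : Fin n → ℝ) f = c)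
    (σ : Measure (EuclideanSpace ℝ (Fin n))) [IsProbabilityMeasure σ]
    (hσsphere : σ (Metric.sphere (0 : EuclideanSpace ℝ (Fin n)) 1)ᶜ = 0)
    (hσinv : ∀ g : Matrix (Fin n) (Fin n) ℝ, g ∈ Matrix.orthogonalGroup (Fin n) ℝ →
      σ.map (fun x : EuclideanSpace ℝ (Fin n) => (WithLp.toLp 2 (g.mulVec x) : EuclideanSpace ℝ (Fin n))) = σ)
    (f : MvPolynomial (Fin n) ℝ) (hf : f.totalDegree ≤ t)
    (x₀ : EuclideanSpace ℝ (Fin n)) (hx₀ : ‖x₀‖ = 1) :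
    (1 / (Fintype.card G : ℝ)) * ∑ g : G,
        MvPolynomial.eval
          (((g : Matrix.orthogonalGroup (Fin n) ℝ) : Matrix (Fin n) (Fin n) ℝ).mulVec x₀) f
      = ∫ x, MvPolynomial.eval (x : Fin n → ℝ) f ∂σ := by
  classical
  haveI : Nonempty G := One.instNonempty
  have hN0 : (Fintype.card G : ℝ) ≠ 0 := Nat.cast_ne_zero.mpr Fintype.card_ne_zero
  set fk : ℕ → MvPolynomial (Fin n) ℝ := fun k => MvPolynomial.homogeneousComponent k f with hfk
  set Fk : ℕ → MvPolynomial (Fin n) ℝ := fun k =>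
    MvPolynomial.C ((Fintype.card G : ℝ)⁻¹) *
      ∑ g : G, linComp ((g : Matrix.orthogonalGroup (Fin n) ℝ) : Matrix (Fin n) (Fin n) ℝ) (fk k)
    with hFk
  have evalFk : ∀ k, ∀ x : Fin n → ℝ,
      MvPolynomial.eval x (Fk k) = (Fintype.card G : ℝ)⁻¹ * ∑ g : G,
        MvPolynomial.eval
          (((g : Matrix.orthogonalGroup (Fin n) ℝ) : Matrix (Fin n) (Fin n) ℝ).mulVec x)
          (fk k) := by
    intro k x
    rw [hFk]
    simp only [_root_.map_mul, MvPolynomial.eval_C, _root_.map_sum, eval_linComp]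
  have inv : ∀ k, ∀ h : G, ∀ x : Fin n → ℝ,
      MvPolynomial.eval
        (((h : Matrix.orthogonalGroup (Fin n) ℝ) : Matrix (Fin n) (Fin n) ℝ).mulVec x) (Fk k)
      = MvPolynomial.eval x (Fk k) := by
    intro k h x
    rw [evalFk, evalFk]
    congr 1
    have key : ∀ g : G,
        MvPolynomial.eval
          (((g : Matrix.orthogonalGroup (Fin n) ℝ) : Matrix (Fin n) (Fin n) ℝ).mulVec
            (((h : Matrix.orthogonalGroup (Fin n) ℝ) : Matrix (Fin n) (Fin n) ℝ).mulVec x))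
          (fk k)
        = MvPolynomial.eval
          ((((g * h : G) : Matrix.orthogonalGroup (Fin n) ℝ) : Matrix (Fin n) (Fin n) ℝ).mulVec x)
          (fk k) := by
      intro g
      rw [Matrix.mulVec_mulVec]
      norm_cast
    calc ∑ g : G, MvPolynomial.eval
          (((g : Matrix.orthogonalGroup (Fin n) ℝ) : Matrix (Fin n) (Fin n) ℝ).mulVec
            (((h : Matrix.orthogonalGroup (Fin n) ℝ) : Matrix (Fin n) (Fin n) ℝ).mulVec x))
          (fk k)
        = ∑ g : G, MvPolynomial.eval
            ((((g * h : G) : Matrix.orthogonalGroup (Fin n) ℝ) :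
              Matrix (Fin n) (Fin n) ℝ).mulVec x) (fk k) := Finset.sum_congr rfl fun g _ => key g
      _ = ∑ g : G, MvPolynomial.eval
            (((g : Matrix.orthogonalGroup (Fin n) ℝ) : Matrix (Fin n) (Fin n) ℝ).mulVec x)
            (fk k) :=
          Equiv.sum_comp (Equiv.mulRight h) (fun g : G => MvPolynomial.eval
            (((g : Matrix.orthogonalGroup (Fin n) ℝ) : Matrix (Fin n) (Fin n) ℝ).mulVec x) (fk k))
  have hFkhom : ∀ k, (Fk k).IsHomogeneous k := by
    intro k
    exact MvPolynomial.IsHomogeneous.C_mul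
      (MvPolynomial.IsHomogeneous.sum _ _ _ fun g _ =>
        linComp_isHomogeneous _ (MvPolynomial.homogeneousComponent_isHomogeneous k f)) _
  have key : ∀ k : ℕ, ∃ c : ℝ, k ≤ t → ∀ x : EuclideanSpace ℝ (Fin n), ‖x‖ = 1 →
      MvPolynomial.eval (x : Fin n → ℝ) (Fk k) = c := by
    intro k
    by_cases hk : k ≤ t
    · obtain ⟨c, hc⟩ := hinv k hk (Fk k) (hFkhom k) (fun g x => inv k g x)
      exact ⟨c, fun _ => hc⟩
    · exact ⟨0, fun h => absurd h hk⟩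
  choose c hc using key
  have hdecomp : (∑ k ∈ range (t + 1), fk k) = f := by
    rw [hfk]
    rw [show (∑ k ∈ range (t + 1), MvPolynomial.homogeneousComponent k f)
        = ∑ k ∈ range (f.totalDegree + 1), MvPolynomial.homogeneousComponent k f from
      (Finset.sum_subset (Finset.range_subset_range.mpr (by omega)) fun k hk1 hk2 =>
        MvPolynomial.homogeneousComponent_eq_zero k f
          (by simp only [Finset.mem_range] at hk1 hk2; omega)).symm]
    exact MvPolynomial.sum_homogeneousComponent f
  have step : ∀ x : EuclideanSpace ℝ (Fin n), ‖x‖ = 1 →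
      (1 / (Fintype.card G : ℝ)) * ∑ g : G,
        MvPolynomial.eval
          (((g : Matrix.orthogonalGroup (Fin n) ℝ) : Matrix (Fin n) (Fin n) ℝ).mulVec x) f
      = ∑ k ∈ range (t + 1), c k := by
    intro x hx
    have e1 : ∀ g : G,
        MvPolynomial.eval
          (((g : Matrix.orthogonalGroup (Fin n) ℝ) : Matrix (Fin n) (Fin n) ℝ).mulVec x) f
        = ∑ k ∈ range (t + 1), MvPolynomial.eval
            (((g : Matrix.orthogonalGroup (Fin n) ℝ) : Matrix (Fin n) (Fin n) ℝ).mulVec x)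
            (fk k) := by
      intro g
      rw [← hdecomp, map_sum]
    calc (1 / (Fintype.card G : ℝ)) * ∑ g : G,
        MvPolynomial.eval
          (((g : Matrix.orthogonalGroup (Fin n) ℝ) : Matrix (Fin n) (Fin n) ℝ).mulVec x) f
        = (Fintype.card G : ℝ)⁻¹ * ∑ g : G, ∑ k ∈ range (t + 1), MvPolynomial.eval
            (((g : Matrix.orthogonalGroup (Fin n) ℝ) : Matrix (Fin n) (Fin n) ℝ).mulVec x)
            (fk k) := by rw [one_div, Finset.sum_congr rfl fun g _ => e1 g]
      _ = ∑ k ∈ range (t + 1), (Fintype.card G : ℝ)⁻¹ * ∑ g : G, MvPolynomial.eval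
            (((g : Matrix.orthogonalGroup (Fin n) ℝ) : Matrix (Fin n) (Fin n) ℝ).mulVec x)
            (fk k) := by rw [Finset.sum_comm, Finset.mul_sum]
      _ = ∑ k ∈ range (t + 1), MvPolynomial.eval (x : Fin n → ℝ) (Fk k) :=
          Finset.sum_congr rfl fun k _ => (evalFk k x).symm
      _ = ∑ k ∈ range (t + 1), c k := Finset.sum_congr rfl fun k hk =>
          hc k (by simp only [Finset.mem_range] at hk; omega) x hx
  rw [step x₀ hx₀]
  -- Now the integral side
  have hcont : Continuous fun x : EuclideanSpace ℝ (Fin n) =>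
      MvPolynomial.eval (x : Fin n → ℝ) f :=
    (MvPolynomial.continuous_eval f).comp (PiLp.continuous_ofLp 2 _)
  have hTlin : ∀ g : Matrix (Fin n) (Fin n) ℝ,
      Continuous fun x : EuclideanSpace ℝ (Fin n) =>
        (WithLp.toLp 2 (g.mulVec x) : EuclideanSpace ℝ (Fin n)) := by
    intro g
    let L : EuclideanSpace ℝ (Fin n) →ₗ[ℝ] EuclideanSpace ℝ (Fin n) :=
      { toFun := fun x : EuclideanSpace ℝ (Fin n) => (WithLp.toLp 2 (g.mulVec x) : EuclideanSpace ℝ (Fin n)),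
        map_add' := fun a b => by simp [Matrix.mulVec_add],
        map_smul' := fun r a => by simp [Matrix.mulVec_smul] }
    exact L.continuous_of_finiteDimensional
  have hae : ∀ᵐ x ∂σ, ‖x‖ = 1 := by
    have hset : (Metric.sphere (0 : EuclideanSpace ℝ (Fin n)) 1)ᶜ
        = {x : EuclideanSpace ℝ (Fin n) | ¬ ‖x‖ = 1} := by
      ext x; simp [mem_sphere_zero_iff_norm]
    exact MeasureTheory.ae_iff.mpr (by rw [← hset]; exact hσsphere)
  set h : G → EuclideanSpace ℝ (Fin n) → ℝ := fun g x =>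
    MvPolynomial.eval
      (((g : Matrix.orthogonalGroup (Fin n) ℝ) : Matrix (Fin n) (Fin n) ℝ).mulVec
        (x : Fin n → ℝ)) f with hh
  have hcg : ∀ g : G, Continuous (h g) := by
    intro g
    exact hcont.comp (hTlin _)
  have hint : ∀ g : G, Integrable (h g) σ := by
    intro g
    obtain ⟨C, hC⟩ := (isCompact_sphere (0 : EuclideanSpace ℝ (Fin n))
      1).exists_bound_of_continuousOn (hcg g).continuousOn
    refine (integrable_const C).mono' (hcg g).aestronglyMeasurable ?_
    filter_upwards [hae] with x hx
    exact hC x (by simpa [mem_sphere_zero_iff_norm] using hx)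
  have hmap : ∀ g : G, ∫ x, MvPolynomial.eval (x : Fin n → ℝ) f ∂σ = ∫ x, h g x ∂σ := by
    intro g
    have hm := hσinv ((g : Matrix.orthogonalGroup (Fin n) ℝ) : Matrix (Fin n) (Fin n) ℝ)
      (g : Matrix.orthogonalGroup (Fin n) ℝ).2
    have key := MeasureTheory.integral_map (μ := σ)
      (φ := fun x : EuclideanSpace ℝ (Fin n) =>
        (WithLp.toLp 2 (((g : Matrix.orthogonalGroup (Fin n) ℝ) : Matrix (Fin n) (Fin n) ℝ).mulVec x) :
          EuclideanSpace ℝ (Fin n)))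
      (f := fun x : EuclideanSpace ℝ (Fin n) => MvPolynomial.eval (x : Fin n → ℝ) f)
      (hTlin _).aemeasurable (by rw [hm]; exact hcont.aestronglyMeasurable)
    rw [hm] at key
    exact key
  have intinv : ∫ x, MvPolynomial.eval (x : Fin n → ℝ) f ∂σ
      = ∫ x, (1 / (Fintype.card G : ℝ)) * ∑ g : G, h g x ∂σ := by
    rw [MeasureTheory.integral_const_mul _ _,
      MeasureTheory.integral_finset_sum univ fun g _ => hint g,
      Finset.sum_congr rfl fun g _ => (hmap g).symm, Finset.sum_const, Finset.card_univ,
      nsmul_eq_mul]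
    field_simp
  have intconst : ∫ x, (1 / (Fintype.card G : ℝ)) * ∑ g : G, h g x ∂σ
      = ∑ k ∈ range (t + 1), c k := by
    rw [MeasureTheory.integral_congr_ae (g := fun _ => ∑ k ∈ range (t + 1), c k)
      (by filter_upwards [hae] with x hx using step x hx)]
    simp
  rw [intinv, intconst]
end

section
/- Let G be a finite subgroup of O(n) and t ≥ 1. If for every x₀ ∈ S^{n−1} the orbit multiset {g·x₀ : g ∈ G} satisfies (1/|G|)·Σ_{g∈G} f(g·x₀) = ∫_{S^{n−1}} f dσ for all polynomials f of degree at most t, then every homogeneous G-invariant polynomial on ℝ^n of degree at most t is constant on the unit sphere S^{n−1}. -/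
open Matrix Finset MeasureTheory

theorem stmt_13 (n t : ℕ) (ht : 1 ≤ t)
    (G : Subgroup (Matrix.orthogonalGroup (Fin n) ℝ)) [Fintype G]
    (σ : Measure (EuclideanSpace ℝ (Fin n))) [IsProbabilityMeasure σ]
    (hσsphere : σ (Metric.sphere (0 : EuclideanSpace ℝ (Fin n)) 1)ᶜ = 0)
    (hσinv : ∀ g : Matrix (Fin n) (Fin n) ℝ, g ∈ Matrix.orthogonalGroup (Fin n) ℝ →
      σ.map (fun x : EuclideanSpace ℝ (Fin n) => (WithLp.toLp 2 (g.mulVec x) : EuclideanSpace ℝ (Fin n))) = σ)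
    (hdesign : ∀ x₀ : EuclideanSpace ℝ (Fin n), ‖x₀‖ = 1 →
      ∀ f : MvPolynomial (Fin n) ℝ, f.totalDegree ≤ t →
        (1 / (Fintype.card G : ℝ)) * ∑ g : G,
            MvPolynomial.eval
              (((g : Matrix.orthogonalGroup (Fin n) ℝ) : Matrix (Fin n) (Fin n) ℝ).mulVec x₀) f
          = ∫ x, MvPolynomial.eval (x : Fin n → ℝ) f ∂σ) :
    ∀ k : ℕ, k ≤ t → ∀ f : MvPolynomial (Fin n) ℝ, f.IsHomogeneous k →
      (∀ g : G, ∀ x : Fin n → ℝ,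
        MvPolynomial.eval
          (((g : Matrix.orthogonalGroup (Fin n) ℝ) : Matrix (Fin n) (Fin n) ℝ).mulVec x) f
          = MvPolynomial.eval x f) →
      ∃ c : ℝ, ∀ x : EuclideanSpace ℝ (Fin n), ‖x‖ = 1 →
        MvPolynomial.eval (x : Fin n → ℝ) f = c := by
  intro k hk f hf hinv
  refine ⟨∫ x, MvPolynomial.eval (x : Fin n → ℝ) f ∂σ, fun x hx => ?_⟩
  have hdeg : f.totalDegree ≤ t := le_trans hf.totalDegree_le hk
  have h := hdesign x hx f hdeg
  have hsum : ∑ g : G,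
      MvPolynomial.eval
        (((g : Matrix.orthogonalGroup (Fin n) ℝ) : Matrix (Fin n) (Fin n) ℝ).mulVec x) f
      = (Fintype.card G : ℝ) * MvPolynomial.eval (x : Fin n → ℝ) f := by
    rw [Finset.sum_congr rfl (fun g _ => hinv g x), Finset.sum_const, Finset.card_univ,
      nsmul_eq_mul]
  rw [hsum] at h
  have hcard : (Fintype.card G : ℝ) ≠ 0 := by
    exact_mod_cast Fintype.card_ne_zero
  field_simp at h
  exact h
end

section
/- Let C be a real symmetric s×s matrix with C·𝟙 = ω·𝟙 for some ω > 0, and suppose C² = c·C + d·J with c > 0, where J is the all-ones matrix and 𝟙 the all-ones vector. Then rank(C) = 1 + (tr(C) − ω)/c. -/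
open Matrix

lemma rank_eq_trace_of_idem {n : ℕ} (P : Matrix (Fin n) (Fin n) ℝ) (h : P * P = P) :
    (P.rank : ℝ) = P.trace := by
  have hproj : LinearMap.IsProj (LinearMap.range P.mulVecLin) P.mulVecLin := by
    constructor
    · intro x; exact LinearMap.mem_range_self _ x
    · rintro x ⟨y, rfl⟩
      show P.mulVecLin (P.mulVecLin y) = P.mulVecLin y
      rw [← LinearMap.comp_apply, ← Matrix.mulVecLin_mul, h]
  have htr := hproj.trace
  have h2 : LinearMap.trace ℝ (Fin n → ℝ) P.mulVecLin = P.trace := by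
    rw [LinearMap.trace_eq_matrix_trace ℝ (Pi.basisFun ℝ (Fin n)) P.mulVecLin,
      LinearMap.toMatrix_eq_toMatrix', ← Matrix.toLin'_apply', LinearMap.toMatrix'_toLin']
  rw [← h2, htr]
  rfl

theorem stmt_15 (s : ℕ) (hs : 0 < s) (C J : Matrix (Fin s) (Fin s) ℝ) (hC : C.IsSymm)
    (hJ : ∀ i j, J i j = 1) (ω c d : ℝ) (hω : 0 < ω) (hc : 0 < c)
    (h1 : C.mulVec ((fun _ => 1) : Fin s → ℝ) = ω • ((fun _ => 1) : Fin s → ℝ))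
    (hCsq : C * C = c • C + d • J) :
    (C.rank : ℝ) = 1 + (C.trace - ω) / c := by
  have hω' : ω ≠ 0 := ne_of_gt hω
  have hc' : c ≠ 0 := ne_of_gt hc
  have hsR : (s : ℝ) ≠ 0 := Nat.cast_ne_zero.mpr hs.ne'
  have i0 : Fin s := ⟨0, hs⟩
  have hrow : ∀ i, ∑ k, C i k = ω := by
    intro i
    have := congrFun h1 i
    simpa [Matrix.mulVec, dotProduct] using this
  have hCJ : C * J = ω • J := by
    ext i j
    simp [Matrix.mul_apply, hJ, hrow i, Matrix.smul_apply]
  have hJC : J * C = ω • J := by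
    ext i j
    have hsym : ∀ k, C k j = C j k := fun k => by
      have := congrFun (congrFun hC.eq k) j
      simpa [Matrix.transpose_apply] using this.symm
    simp only [Matrix.mul_apply, hJ, one_mul, Matrix.smul_apply, smul_eq_mul]
    rw [Finset.sum_congr rfl (fun k _ => hsym k)]
    simp [hrow j]
  have hJJ : J * J = (s : ℝ) • J := by
    ext i j
    simp [Matrix.mul_apply, hJ, Matrix.smul_apply]
  -- d * s = ω^2 - c * ω
  have hds : d * s = ω ^ 2 - c * ω := by
    have e1 : C * C * J = (ω * ω) • J := by
      rw [Matrix.mul_assoc, hCJ, Matrix.mul_smul, hCJ, smul_smul]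
    have e2 : (c • C + d • J) * J = (c * ω + d * s) • J := by
      simp only [Matrix.add_mul, Matrix.smul_mul, hCJ, hJJ]
      match_scalars
      ring
    have e3 : (ω * ω) • J = (c * ω + d * s) • J := by rw [← e1, hCsq, e2]
    have h00 := congrFun (congrFun e3 i0) i0
    simp only [Matrix.smul_apply, hJ, smul_eq_mul, mul_one] at h00
    nlinarith [h00]
  set D : Matrix (Fin s) (Fin s) ℝ := (s : ℝ) • C - ω • J with hDdef
  have hDJ : D * J = 0 := by
    rw [hDdef, Matrix.sub_mul, Matrix.smul_mul, Matrix.smul_mul, hCJ, hJJ]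
    match_scalars
    ring
  have hJD : J * D = 0 := by
    rw [hDdef, Matrix.mul_sub, Matrix.mul_smul, Matrix.mul_smul, hJC, hJJ]
    match_scalars
    ring
  have hDD : D * D = ((s : ℝ) * c) • D := by
    rw [hDdef]
    simp only [Matrix.sub_mul, Matrix.mul_sub, Matrix.smul_mul, Matrix.mul_smul, hCsq, hCJ,
      hJC, hJJ]
    match_scalars
    · ring
    · linear_combination (s : ℝ) * hds
  set P1 : Matrix (Fin s) (Fin s) ℝ := ((s : ℝ) * c)⁻¹ • D with hP1
  set P2 : Matrix (Fin s) (Fin s) ℝ := (s : ℝ)⁻¹ • J with hP2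
  have hP1P1 : P1 * P1 = P1 := by
    rw [hP1, Matrix.smul_mul, Matrix.mul_smul, hDD]
    match_scalars <;> field_simp <;> ring
  have hP2P2 : P2 * P2 = P2 := by
    rw [hP2, Matrix.smul_mul, Matrix.mul_smul, hJJ]
    match_scalars <;> field_simp <;> ring
  have hP1P2 : P1 * P2 = 0 := by
    rw [hP1, hP2, Matrix.smul_mul, Matrix.mul_smul, hDJ]; simp
  have hP2P1 : P2 * P1 = 0 := by
    rw [hP1, hP2, Matrix.smul_mul, Matrix.mul_smul, hJD]; simp
  set P : Matrix (Fin s) (Fin s) ℝ := P1 + P2 with hPdef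
  have hPP : P * P = P := by
    rw [hPdef, Matrix.add_mul, Matrix.mul_add, Matrix.mul_add, hP1P1, hP2P2, hP1P2, hP2P1]
    simp
  have hCeq : C = c • P1 + ω • P2 := by
    rw [hP1, hP2, hDdef]
    match_scalars <;> field_simp <;> ring
  have hPC : P * C = C := by
    simp only [hPdef, hCeq, Matrix.add_mul, Matrix.mul_add, Matrix.mul_smul, hP1P1, hP2P2,
      hP1P2, hP2P1, smul_zero, add_zero, zero_add]
  have hCM : C * (c⁻¹ • P1 + ω⁻¹ • P2) = P := by
    simp only [hCeq, hPdef, Matrix.add_mul, Matrix.mul_add, Matrix.smul_mul, Matrix.mul_smul,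
      hP1P1, hP2P2, hP1P2, hP2P1, smul_zero, add_zero, zero_add, smul_smul,
      mul_inv_cancel₀ hc', mul_inv_cancel₀ hω', inv_mul_cancel₀ hc', inv_mul_cancel₀ hω', one_smul]
  have hrank : C.rank = P.rank := by
    apply le_antisymm
    · calc C.rank = (P * C).rank := by rw [hPC]
        _ ≤ P.rank := Matrix.rank_mul_le_left _ _
    · calc P.rank = (C * (c⁻¹ • P1 + ω⁻¹ • P2)).rank := by rw [hCM]
        _ ≤ C.rank := Matrix.rank_mul_le_left _ _
  have htrJ : J.trace = (s : ℝ) := by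
    simp [Matrix.trace, Matrix.diag, hJ]
  have htrP : P.trace = 1 + (C.trace - ω) / c := by
    rw [hPdef, Matrix.trace_add, hP1, hP2, Matrix.trace_smul, Matrix.trace_smul, hDdef,
      Matrix.trace_sub, Matrix.trace_smul, Matrix.trace_smul, htrJ]
    field_simp
    simp only [smul_eq_mul]
    field_simp
    ring
  rw [hrank, rank_eq_trace_of_idem P hPP, htrP]
end
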